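/- Let Λ, X be finite, ∂ a neighborhood system on Λ, and Φ = {Φ_V} a pair nearest-neighbor potential (Φ_{{t}∪V} ≡ 0 unless V ⊆ ∂t). Define Δ_t^z(x,u) = Σ_{∅≠J⊆Λ\{t}} (Φ_{{t}∪J}(u z_J) − Φ_{{t}∪J}(x z_J)) + Φ_{{t}}(u) − Φ_{{t}}(x). Then Δ satisfies the Markov locality condition: Δ_t^{z}(x,u) = Δ_t^{z'}(x,u) whenever z, z' ∈ X^{Λ\{t}} agree on ∂t. Consequently, the Gibbs random field with potential Φ is Markov with respect to ∂. -/
import Mathlib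


def cat {Λ X : Type*} [DecidableEq Λ] (t : Λ) (x : X) (z : {s : Λ // s ≠ t} → X) : Λ → X :=
  fun s => if h : s = t then x else z ⟨s, h⟩

def catT {Λ X : Type*} [DecidableEq Λ] (t s : Λ) (y : X) (z : {r : Λ // r ≠ t ∧ r ≠ s} → X) :
    {r : Λ // r ≠ t} → X :=
  fun r => if h : r.1 = s then y else z ⟨r.1, r.2, h⟩

def catS {Λ X : Type*} [DecidableEq Λ] (t s : Λ) (x : X) (z : {r : Λ // r ≠ t ∧ r ≠ s} → X) :
    {r : Λ // r ≠ s} → X :=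
  fun r => if h : r.1 = t then x else z ⟨r.1, h, r.2⟩
theorem stmt16 {Λ X : Type*} [DecidableEq Λ] [Fintype Λ] [Fintype X] [Nonempty X]
    (nbhd : Λ → Finset Λ)
    (hself : ∀ t, t ∉ nbhd t) (hsymm : ∀ t s, s ∈ nbhd t ↔ t ∈ nbhd s)
    (Φ : Finset Λ → (Λ → X) → ℝ)
    (hloc : ∀ V : Finset Λ, ∀ x y : Λ → X, (∀ s ∈ V, x s = y s) → Φ V x = Φ V y)
    (hpair : ∀ t : Λ, ∀ V : Finset Λ, t ∉ V → ¬ V ⊆ nbhd t →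
      ∀ x : Λ → X, Φ (insert t V) x = 0)
    (Δ : ∀ t : Λ, ({s : Λ // s ≠ t} → X) → X → X → ℝ)
    (hΔ : ∀ t z x u, Δ t z x u
      = (∑ J ∈ (Finset.univ.erase t).powerset.filter (fun J : Finset Λ => J ≠ ∅),
          (Φ (insert t J) (cat t u z) - Φ (insert t J) (cat t x z)))
        + Φ {t} (cat t u z) - Φ {t} (cat t x z)) :
    (∀ t : Λ, ∀ x u : X, ∀ z z' : {s : Λ // s ≠ t} → X,
        (∀ s : {s : Λ // s ≠ t}, s.1 ∈ nbhd t → z s = z' s) → Δ t z x u = Δ t z' x u) ∧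
    (∀ P : (Λ → X) → ℝ, (∀ σ, 0 < P σ) → ∑ σ, P σ = 1 →
      (∀ t : Λ, ∀ z : {s : Λ // s ≠ t} → X, ∀ x : X,
        P (cat t x z) / ∑ v : X, P (cat t v z)
          = Real.exp (-(∑ J ∈ (Finset.univ.erase t).powerset, Φ (insert t J) (cat t x z)))
            / ∑ α : X, Real.exp
                (-(∑ J ∈ (Finset.univ.erase t).powerset, Φ (insert t J) (cat t α z)))) →
      (∀ t : Λ, ∀ z z' : {s : Λ // s ≠ t} → X,
        (∀ s : {s : Λ // s ≠ t}, s.1 ∈ nbhd t → z s = z' s) →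
        ∀ x : X, P (cat t x z) / ∑ v : X, P (cat t v z)
          = P (cat t x z') / ∑ v : X, P (cat t v z'))) := by
  have key : ∀ t : Λ, ∀ z z' : {s : Λ // s ≠ t} → X,
      (∀ s : {s : Λ // s ≠ t}, s.1 ∈ nbhd t → z s = z' s) →
      ∀ x : X, ∀ J : Finset Λ, t ∉ J →
      Φ (insert t J) (cat t x z) = Φ (insert t J) (cat t x z') := by
    intro t z z' hzz x J htJ
    by_cases hJ : J ⊆ nbhd t
    · apply hloc
      intro s hs
      unfold cat
      by_cases h : s = t
      · simp [h]
      · simp only [dif_neg h]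
        exact hzz ⟨s, h⟩ (hJ (by simpa [Finset.mem_insert, h] using hs))
    · rw [hpair t J htJ hJ, hpair t J htJ hJ]
  refine ⟨?_, ?_⟩
  · intro t x u z z' hzz
    rw [hΔ, hΔ]
    have h0 : ({t} : Finset Λ) = insert t (∅ : Finset Λ) := by simp
    rw [h0, key t z z' hzz x ∅ (by simp), key t z z' hzz u ∅ (by simp)]
    congr 2
    apply Finset.sum_congr rfl
    intro J hJ
    simp only [Finset.mem_filter, Finset.mem_powerset] at hJ
    have htJ : t ∉ J := fun h => (Finset.mem_erase.mp (hJ.1 h)).1 rfl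
    rw [key t z z' hzz x J htJ, key t z z' hzz u J htJ]
  · intro P hpos hsum hg t z z' hzz x
    rw [hg t z x, hg t z' x]
    have hS : ∀ v : X, (∑ J ∈ (Finset.univ.erase t).powerset, Φ (insert t J) (cat t v z))
        = ∑ J ∈ (Finset.univ.erase t).powerset, Φ (insert t J) (cat t v z') := by
      intro v
      apply Finset.sum_congr rfl
      intro J hJ
      have htJ : t ∉ J := fun h =>
        (Finset.mem_erase.mp ((Finset.mem_powerset.mp hJ) h)).1 rfl
      exact key t z z' hzz v J htJ
    rw [hS x]
    congr 1
    exact Finset.sum_congr rfl fun α _ => by rw [hS α]
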